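/- arXiv:1506.00423 — 7 statements merged into one kernel-verified Lean document; each statement's English description precedes it below -/
import Mathlib

section
/- For fixed α ∈ (0,1] and integer T ≥ 1, the function m ↦ G(T,α,m) = (1/α)(1 - (1 - αm/T)(1 - α/T)^{T-m}) is nondecreasing in the integer m for 0 ≤ m ≤ T. -/
lemma step_aux (α : ℝ) (hα : 0 < α) (hα1 : α ≤ 1) (T : ℕ) (hT : 1 ≤ T)
    (m : ℕ) (hm : m + 1 ≤ T) :
    (1 - α * (m + 1 : ℕ) / T) * (1 - α / T) ^ (T - (m + 1)) ≤
      (1 - α * m / T) * (1 - α / T) ^ (T - m) := by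
  have hT0 : (0 : ℝ) < T := by exact_mod_cast Nat.lt_of_lt_of_le Nat.zero_lt_one hT
  have hT1 : (1 : ℝ) ≤ T := by exact_mod_cast hT
  have hb : 0 ≤ 1 - α / T := by
    have : α / T ≤ 1 := by
      rw [div_le_one hT0]; linarith
    linarith
  have hTm : T - m = (T - (m + 1)) + 1 := by omega
  rw [hTm, pow_succ]
  have hP : (0 : ℝ) ≤ (1 - α / T) ^ (T - (m + 1)) := pow_nonneg hb _
  have key : (1 - α * (m + 1 : ℕ) / T) ≤ (1 - α * m / T) * (1 - α / T) := by
    push_cast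
    have h1 : (1 - α * m / T) * (1 - α / T) - (1 - α * (m + 1) / T) = α ^ 2 * m / T ^ 2 := by
      field_simp; ring
    nlinarith [mul_nonneg (mul_nonneg (sq_nonneg α) (Nat.cast_nonneg m : (0:ℝ) ≤ m))
      (le_of_lt (inv_pos.mpr (pow_pos hT0 2))), div_nonneg (mul_nonneg (sq_nonneg α)
      (Nat.cast_nonneg m : (0:ℝ) ≤ m)) (le_of_lt (pow_pos hT0 2))]
  calc (1 - α * (m + 1 : ℕ) / T) * (1 - α / T) ^ (T - (m + 1))
      ≤ (1 - α * m / T) * (1 - α / T) * (1 - α / T) ^ (T - (m + 1)) :=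
        mul_le_mul_of_nonneg_right key hP
    _ = (1 - α * m / T) * ((1 - α / T) ^ (T - (m + 1)) * (1 - α / T)) := by ring

lemma mono_aux (α : ℝ) (hα : 0 < α) (hα1 : α ≤ 1) (T : ℕ) (hT : 1 ≤ T)
    (m₁ m₂ : ℕ) (h12 : m₁ ≤ m₂) (h2T : m₂ ≤ T) :
    (1 - α * m₂ / T) * (1 - α / T) ^ (T - m₂) ≤
      (1 - α * m₁ / T) * (1 - α / T) ^ (T - m₁) := by
  induction m₂, h12 using Nat.le_induction with
  | base => exact le_refl _
  | succ n hn ih =>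
    have hnT : n + 1 ≤ T := h2T
    calc (1 - α * (n + 1 : ℕ) / T) * (1 - α / T) ^ (T - (n + 1))
        ≤ (1 - α * n / T) * (1 - α / T) ^ (T - n) := step_aux α hα hα1 T hT n hnT
      _ ≤ _ := ih (by omega)

theorem stmt_1 (α : ℝ) (hα : 0 < α) (hα1 : α ≤ 1) (T : ℕ) (hT : 1 ≤ T)
    (m₁ m₂ : ℕ) (h12 : m₁ ≤ m₂) (h2T : m₂ ≤ T) :
    (1 / α) * (1 - (1 - α * m₁ / T) * (1 - α / T) ^ (T - m₁)) ≤
      (1 / α) * (1 - (1 - α * m₂ / T) * (1 - α / T) ^ (T - m₂)) := by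
  have h := mono_aux α hα hα1 T hT m₁ m₂ h12 h2T
  have hα' : 0 ≤ 1 / α := by positivity
  apply mul_le_mul_of_nonneg_left _ hα'
  linarith
end

section
/- For α ∈ (0,1] and T ≥ 1, G_CC(T,α) = (1/α)(1 - (1 - α/T)^T) ≥ 1 - (1 - 1/T)^T, i.e., the Conforti–Cornuéjols guarantee dominates the Nemhauser–Wolsey–Fisher guarantee. -/
theorem stmt_4 (α : ℝ) (hα : 0 < α) (hα1 : α ≤ 1) (T : ℕ) (hT : 1 ≤ T) :
    (1 / α) * (1 - (1 - α / T) ^ T) ≥ 1 - (1 - 1 / (T : ℝ)) ^ T := by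
  have hT' : (1:ℝ) ≤ T := by exact_mod_cast hT
  have hTpos : (0:ℝ) < T := by linarith
  have key : ∀ x : ℝ, 1 - x ^ T = (∑ i ∈ Finset.range T, x ^ i) * (1 - x) := by
    intro x
    linear_combination geom_sum_mul x T
  have hx0 : 0 ≤ 1 - α / T := by
    have : α / T ≤ 1 := by rw [div_le_one hTpos]; linarith
    linarith
  have h10 : 0 ≤ 1 - 1 / (T:ℝ) := by
    have : 1 / (T:ℝ) ≤ 1 := by rw [div_le_one hTpos]; linarith
    linarith
  have hle : 1 - 1 / (T:ℝ) ≤ 1 - α / T := by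
    have : α / T ≤ 1 / (T:ℝ) := by gcongr
    linarith
  have hsum : ∑ i ∈ Finset.range T, (1 - 1/(T:ℝ)) ^ i ≤
      ∑ i ∈ Finset.range T, (1 - α/(T:ℝ)) ^ i :=
    Finset.sum_le_sum fun i _ => pow_le_pow_left₀ h10 hle i
  rw [ge_iff_le, key, key]
  have e1 : 1 - (1 - 1/(T:ℝ)) = 1/T := by ring
  have e2 : 1 - (1 - α/(T:ℝ)) = α/T := by ring
  rw [e1, e2]
  have hαne : α ≠ 0 := ne_of_gt hα
  have e3 : 1/α * ((∑ i ∈ Finset.range T, (1 - α/(T:ℝ)) ^ i) * (α/T))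
      = (∑ i ∈ Finset.range T, (1 - α/(T:ℝ)) ^ i) * (1/T) := by
    field_simp
  rw [e3]
  exact mul_le_mul_of_nonneg_right hsum (by positivity)
end

section
/- Let α ∈ (0,1], T ≥ 1, and 1 ≤ r ≤ n with r + (n−r) = n. Define f on subsets of X = {a_1,...,a_r, b_1,...,b_{n−r}} by f({a_{i_1},...,a_{i_s}, b_{j_1},...,b_{j_u}}) = u + (1 − αu/T) Σ_{k=1}^s (1 − α/T)^{i_k − 1}. Then f is submodular. -/
/-- The Conforti–Cornuéjols-type construction: on `X = {a_1,…,a_r} ⊔ {b_1,…,b_k}`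
(modeled as `Fin r ⊕ Fin k`), `f(S) = u + (1 − αu/T) Σ_{a_i ∈ S} (1 − α/T)^{i−1}`,
where `u` is the number of `b`-elements of `S`. -/
noncomputable def constructionF (α : ℝ) (T : ℕ) (r k : ℕ)
    (S : Finset (Fin r ⊕ Fin k)) : ℝ :=
  (∑ x ∈ S, Sum.elim (fun _ => (0 : ℝ)) (fun _ => 1) x)
    + (1 - α * (∑ x ∈ S, Sum.elim (fun _ => (0 : ℝ)) (fun _ => 1) x) / T)
      * ∑ x ∈ S, Sum.elim (fun i : Fin r => (1 - α / T) ^ (i : ℕ)) (fun _ => (0 : ℝ)) x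

theorem stmt_7 (α : ℝ) (hα : 0 < α) (hα1 : α ≤ 1) (T r k : ℕ) (hT : 1 ≤ T)
    (hkT : k ≤ T) :
    ∀ S R : Finset (Fin r ⊕ Fin k),
      constructionF α T r k S + constructionF α T r k R ≥
        constructionF α T r k (S ∪ R) + constructionF α T r k (S ∩ R) := by
  intro S R
  classical
  set g : Fin r ⊕ Fin k → ℝ := Sum.elim (fun _ => (0 : ℝ)) (fun _ => 1) with hg
  set h : Fin r ⊕ Fin k → ℝ :=
    Sum.elim (fun i : Fin r => (1 - α / T) ^ (i : ℕ)) (fun _ => (0 : ℝ)) with hh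
  have hT0 : (0:ℝ) < T := by exact_mod_cast hT
  have hg0 : ∀ x, 0 ≤ g x := by rintro (i|j) <;> simp [hg]
  have hh0 : ∀ x, 0 ≤ h x := by
    rintro (i|j)
    · have h1 : (1:ℝ) ≤ T := by exact_mod_cast hT
      have : α / T ≤ 1 := by rw [div_le_one hT0]; linarith
      simp only [hh, Sum.elim_inl]
      have : (0:ℝ) ≤ 1 - α / T := by linarith
      positivity
    · simp [hh]
  have hmodg : (∑ x ∈ S ∪ R, g x) + (∑ x ∈ S ∩ R, g x)
      = (∑ x ∈ S, g x) + (∑ x ∈ R, g x) := Finset.sum_union_inter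
  have hmodh : (∑ x ∈ S ∪ R, h x) + (∑ x ∈ S ∩ R, h x)
      = (∑ x ∈ S, h x) + (∑ x ∈ R, h x) := Finset.sum_union_inter
  have hgS : (∑ x ∈ S ∩ R, g x) ≤ ∑ x ∈ S, g x :=
    Finset.sum_le_sum_of_subset_of_nonneg Finset.inter_subset_left (fun x _ _ => hg0 x)
  have hgR : (∑ x ∈ S ∩ R, g x) ≤ ∑ x ∈ R, g x :=
    Finset.sum_le_sum_of_subset_of_nonneg Finset.inter_subset_right (fun x _ _ => hg0 x)
  have hhS : (∑ x ∈ S ∩ R, h x) ≤ ∑ x ∈ S, h x :=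
    Finset.sum_le_sum_of_subset_of_nonneg Finset.inter_subset_left (fun x _ _ => hh0 x)
  have hhR : (∑ x ∈ S ∩ R, h x) ≤ ∑ x ∈ R, h x :=
    Finset.sum_le_sum_of_subset_of_nonneg Finset.inter_subset_right (fun x _ _ => hh0 x)
  have hc : (0:ℝ) ≤ α / T := by positivity
  simp only [constructionF, ← hg, ← hh]
  set uS := ∑ x ∈ S, g x
  set uR := ∑ x ∈ R, g x
  set uU := ∑ x ∈ S ∪ R, g x
  set uI := ∑ x ∈ S ∩ R, g x
  set AS := ∑ x ∈ S, h x
  set AR := ∑ x ∈ R, h x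
  set AU := ∑ x ∈ S ∪ R, h x
  set AI := ∑ x ∈ S ∩ R, h x
  have key : uS * AS + uR * AR ≤ uU * AU + uI * AI := by
    have e1 : uU = uS + uR - uI := by linarith
    have e2 : AU = AS + AR - AI := by linarith
    rw [e1, e2]
    nlinarith [mul_nonneg (sub_nonneg.mpr hgS) (sub_nonneg.mpr hhR),
      mul_nonneg (sub_nonneg.mpr hgR) (sub_nonneg.mpr hhS)]
  have expand : ∀ u A : ℝ, u + (1 - α * u / T) * A = u + A - (α / T) * (u * A) := by
    intro u A; field_simp; ring
  rw [expand uS AS, expand uR AR, expand uU AU, expand uI AI]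
  nlinarith [mul_le_mul_of_nonneg_left key hc]
end

section
/- With f as in the Conforti–Cornuéjols-type construction (f({a_{i_1},...,a_{i_s}, b_{j_1},...,b_{j_u}}) = u + (1 − αu/T) Σ_{k=1}^s (1 − α/T)^{i_k − 1}, with n − r ≤ T), f is nondecreasing: for any S ⊊ X and x ∉ S, f(S ∪ {x}) ≥ f(S). -/
theorem stmt_8 (α : ℝ) (hα : 0 < α) (hα1 : α ≤ 1) (T r k : ℕ) (hT : 1 ≤ T)
    (hkT : k ≤ T) (S : Finset (Fin r ⊕ Fin k)) (x : Fin r ⊕ Fin k) (hx : x ∉ S) :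
    constructionF α T r k (insert x S) ≥ constructionF α T r k S := by
  have hT0 : (0:ℝ) < T := by exact_mod_cast hT
  unfold constructionF
  set g : Fin r ⊕ Fin k → ℝ := Sum.elim (fun _ => (0 : ℝ)) (fun _ => 1) with hg
  set h : Fin r ⊕ Fin k → ℝ :=
    Sum.elim (fun i : Fin r => (1 - α / T) ^ (i : ℕ)) (fun _ => (0 : ℝ)) with hh
  have hxq : α / (T:ℝ) ≤ 1 := by
    rw [div_le_one hT0]; calc α ≤ 1 := hα1
    _ ≤ T := by exact_mod_cast hT
  have hq0 : 0 ≤ 1 - α / T := by linarith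
  have hu : ∑ y ∈ S, g y ≤ (k : ℝ) := by
    have h1 : ∑ y ∈ S, g y ≤ ∑ y ∈ (Finset.univ : Finset (Fin r ⊕ Fin k)), g y := by
      apply Finset.sum_le_sum_of_subset_of_nonneg (Finset.subset_univ S)
      rintro (i|j) _ _ <;> simp [hg]
    have h2 : ∑ y ∈ (Finset.univ : Finset (Fin r ⊕ Fin k)), g y = k := by
      rw [Fintype.sum_sum_type]; simp [hg]
    linarith
  have hu0 : 0 ≤ ∑ y ∈ S, g y := by
    apply Finset.sum_nonneg; rintro (i|j) _ <;> simp [hg]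
  have hA : α / T * ∑ y ∈ S, h y ≤ 1 := by
    have h1 : ∑ y ∈ S, h y ≤ ∑ y ∈ (Finset.univ : Finset (Fin r ⊕ Fin k)), h y := by
      apply Finset.sum_le_sum_of_subset_of_nonneg (Finset.subset_univ S)
      rintro (i|j) _ _ <;> simp [hh] <;> positivity
    have h2 : ∑ y ∈ (Finset.univ : Finset (Fin r ⊕ Fin k)), h y
        = ∑ i ∈ Finset.range r, (1 - α / T) ^ i := by
      rw [Fintype.sum_sum_type]; simp [hh, Fin.sum_univ_eq_sum_range]
    have h3 : ((1 - α/T) - 1) * ∑ i ∈ Finset.range r, (1 - α / T) ^ i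
        = (1 - α/T)^r - 1 := by
      have := geom_sum_mul (1 - α/T) r; linarith [this]
    have h4 : 0 ≤ (1 - α/T)^r := by positivity
    have h5 : α / T * ∑ i ∈ Finset.range r, (1 - α / T) ^ i ≤ 1 := by nlinarith
    have h6 : 0 < α / T := by positivity
    calc α / T * ∑ y ∈ S, h y ≤ α / T * ∑ i ∈ Finset.range r, (1 - α / T) ^ i := by
          rw [← h2]; exact mul_le_mul_of_nonneg_left h1 (le_of_lt h6)
    _ ≤ 1 := h5
  have hAnn : 0 ≤ ∑ y ∈ S, h y := by
    apply Finset.sum_nonneg; rintro (i|j) _ <;> simp [hh]; positivity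
  rw [Finset.sum_insert hx, Finset.sum_insert hx]
  have hkT' : (k:ℝ) ≤ T := by exact_mod_cast hkT
  rcases x with i | j
  · have hg0 : g (Sum.inl i) = 0 := rfl
    have hh0 : h (Sum.inl i) = (1 - α/T) ^ (i:ℕ) := rfl
    rw [hg0, hh0]
    have hp : (0:ℝ) ≤ (1 - α/T) ^ (i:ℕ) := by positivity
    have hq : α * (∑ y ∈ S, g y) / T ≤ 1 := by
      rw [div_le_one hT0]
      calc α * (∑ y ∈ S, g y) ≤ 1 * (k:ℝ) := mul_le_mul hα1 hu hu0 zero_le_one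
      _ ≤ T := by linarith
    have key : (0:ℝ) ≤ (1 - α * (∑ y ∈ S, g y) / T) * (1 - α/T) ^ (i:ℕ) :=
      mul_nonneg (by linarith) hp
    have e : (1 - α * (0 + ∑ y ∈ S, g y) / T) * ((1 - α/T) ^ (i:ℕ) + ∑ y ∈ S, h y)
        = (1 - α * (∑ y ∈ S, g y) / T) * (1 - α/T) ^ (i:ℕ)
          + (1 - α * (∑ y ∈ S, g y) / T) * ∑ y ∈ S, h y := by ring
    rw [e]; linarith
  · have hg0 : g (Sum.inr j) = 1 := rfl
    have hh0 : h (Sum.inr j) = 0 := rfl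
    rw [hg0, hh0]
    have e : (1 - α * (1 + ∑ y ∈ S, g y) / T) * (0 + ∑ y ∈ S, h y)
        = (1 - α * (∑ y ∈ S, g y) / T) * ∑ y ∈ S, h y - α / T * ∑ y ∈ S, h y := by ring
    rw [e]; linarith
end

section
/- With f as in the construction, for any S = {a_{i_1},...,a_{i_s}, b_{j_1},...,b_{j_u}} ⊊ X and b_j ∉ S, the marginal gain is f(S ∪ {b_j}) − f(S) = 1 − (α/T) Σ_{k=1}^s (1 − α/T)^{i_k − 1}, and this quantity is nonnegative. -/
theorem stmt_10 (α : ℝ) (hα : 0 < α) (hα1 : α ≤ 1) (T r k : ℕ) (hT : 1 ≤ T)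
    (hkT : k ≤ T) (S : Finset (Fin r ⊕ Fin k)) (j : Fin k) (hj : Sum.inr j ∉ S) :
    constructionF α T r k (insert (Sum.inr j) S) - constructionF α T r k S =
      1 - (α / T) * ∑ x ∈ S,
        Sum.elim (fun i : Fin r => (1 - α / T) ^ (i : ℕ)) (fun _ => (0 : ℝ)) x ∧
    0 ≤ 1 - (α / T) * ∑ x ∈ S,
        Sum.elim (fun i : Fin r => (1 - α / T) ^ (i : ℕ)) (fun _ => (0 : ℝ)) x := by
  have hT0 : (0 : ℝ) < T := by exact_mod_cast Nat.lt_of_lt_of_le Nat.zero_lt_one hT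
  have hT1 : (1 : ℝ) ≤ T := by exact_mod_cast hT
  have hq0 : 0 ≤ α / T := le_of_lt (div_pos hα hT0)
  have hq1 : α / T ≤ 1 := by
    rw [div_le_one hT0]; linarith
  have hx0 : 0 ≤ 1 - α / T := by linarith
  constructor
  · simp only [constructionF, Finset.sum_insert hj, Sum.elim_inr]
    field_simp
    ring
  · set P := ∑ x ∈ S, Sum.elim (fun i : Fin r => (1 - α / T) ^ (i : ℕ))
      (fun _ => (0 : ℝ)) x with hP
    have hPle : P ≤ ∑ i ∈ Finset.range r, (1 - α / T) ^ i := by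
      have h1 : P ≤ ∑ x : Fin r ⊕ Fin k, Sum.elim
          (fun i : Fin r => (1 - α / T) ^ (i : ℕ)) (fun _ => (0 : ℝ)) x := by
        apply Finset.sum_le_sum_of_subset_of_nonneg (Finset.subset_univ S)
        intro x _ _
        cases x with
        | inl i => simpa using pow_nonneg hx0 _
        | inr b => simp
      calc P ≤ _ := h1
        _ = ∑ i : Fin r, (1 - α / T) ^ (i : ℕ) := by
            rw [Fintype.sum_sum_type]; simp
        _ = ∑ i ∈ Finset.range r, (1 - α / T) ^ i := by
            rw [Finset.sum_range fun i => (1 - α / T) ^ i]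
    have hgeom : (α / T) * ∑ i ∈ Finset.range r, (1 - α / T) ^ i
        = 1 - (1 - α / T) ^ r := by
      have := geom_sum_mul (1 - α / T) r
      nlinarith [this]
    have hle1 : (α / T) * P ≤ 1 := by
      calc (α / T) * P ≤ (α / T) * ∑ i ∈ Finset.range r, (1 - α / T) ^ i :=
            mul_le_mul_of_nonneg_left hPle hq0
        _ = 1 - (1 - α / T) ^ r := hgeom
        _ ≤ 1 := by nlinarith [pow_nonneg hx0 r]
    linarith
end

section
/- Let α ∈ (0,1], integers 0 < m < T, and define c ∈ ℝ^T by c_t = (1/T)(1 − αm/T)(1 − α/T)^{T−m−t} for 1 ≤ t ≤ T−m and c_t = (T−m)/((2T−m+1−t)(2T−m−t)) for T−m+1 ≤ t ≤ T. Then c is feasible for the dual linear program: c_t ≥ 0 for all t; T·c_t + α Σ_{i=t+1}^T c_i ≤ 1 for 1 ≤ t ≤ T−m; and (2T−m+1−t)c_t + Σ_{i=t+1}^T c_i ≤ 1 for T−m+1 ≤ t ≤ T. Moreover these T constraints hold with equality. -/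
theorem stmt_13 (α : ℝ) (hα : 0 < α) (hα1 : α ≤ 1) (T m : ℕ) (hm : 0 < m) (hmT : m < T)
    (c : ℕ → ℝ)
    (hc1 : ∀ t, 1 ≤ t → t ≤ T - m →
      c t = (1 / T) * (1 - α * m / T) * (1 - α / T) ^ (T - m - t))
    (hc2 : ∀ t, T - m + 1 ≤ t → t ≤ T →
      c t = ((T : ℝ) - m) / ((2 * T - m + 1 - t) * (2 * T - m - t))) :
    (∀ t, 1 ≤ t → t ≤ T → 0 ≤ c t) ∧
    (∀ t, 1 ≤ t → t ≤ T - m →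
      (T : ℝ) * c t + α * ∑ i ∈ Finset.Icc (t + 1) T, c i = 1) ∧
    (∀ t, T - m + 1 ≤ t → t ≤ T →
      (2 * (T : ℝ) - m + 1 - t) * c t + ∑ i ∈ Finset.Icc (t + 1) T, c i = 1) := by
  have hTm' : (m:ℝ) < T := by exact_mod_cast hmT
  have hm' : (0:ℝ) < m := by exact_mod_cast hm
  have hT0 : (0:ℝ) < T := lt_trans hm' hTm'
  have hn : (0:ℝ) < (T:ℝ) - m := by linarith
  -- tail sums (telescoping)
  have tail : ∀ k, k ≤ m → ∑ i ∈ Finset.Icc (T - k + 1) T, c i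
      = 1 - ((T:ℝ) - m) / ((T - m) + k) := by
    intro k hk
    induction k with
    | zero =>
      rw [Finset.Icc_eq_empty (by omega), Finset.sum_empty]
      push_cast
      rw [add_zero, div_self hn.ne']
      ring
    | succ k ih =>
      have hk' : k ≤ m := by omega
      have hset : T - (k + 1) + 1 = T - k := by omega
      have hle : T - k ≤ T := by omega
      rw [hset, Finset.Icc_eq_cons_Ioc hle, Finset.sum_cons, ← Finset.Icc_add_one_left_eq_Ioc,
        ih hk']
      have ht1 : T - m + 1 ≤ T - k := by omega
      rw [hc2 (T - k) ht1 hle]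
      have hcast : ((T - k : ℕ) : ℝ) = (T:ℝ) - k := by
        have : k ≤ T := by omega
        push_cast [this]; ring
      rw [hcast]
      have hk0 : (0:ℝ) ≤ k := by positivity
      have d1 : (0:ℝ) < (T:ℝ) - m + k := by linarith
      have d2 : (0:ℝ) < (T:ℝ) - m + k + 1 := by linarith
      have e1 : 2 * (T:ℝ) - m + 1 - ((T:ℝ) - k) = (T:ℝ) - m + k + 1 := by ring
      have e2 : 2 * (T:ℝ) - m - ((T:ℝ) - k) = (T:ℝ) - m + k := by ring
      rw [e1, e2]
      push_cast
      field_simp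
      ring
  -- main recursion for first T - m coordinates
  have main : ∀ d, 1 ≤ T - m - d →
      (T:ℝ) * c (T - m - d) + α * ∑ i ∈ Finset.Icc (T - m - d + 1) T, c i = 1 := by
    intro d
    induction d with
    | zero =>
      intro h
      have hsum := tail m le_rfl
      simp only [Nat.sub_zero]
      rw [hsum, hc1 (T - m) h le_rfl,
        Nat.sub_self, pow_zero]
      have : (T:ℝ) - m + m = T := by ring
      rw [this]
      field_simp
      ring
    | succ d ih =>
      intro h
      have hprev : 1 ≤ T - m - d := by omega
      have IH := ih hprev
      have hset : T - m - (d + 1) + 1 = T - m - d := by omega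
      have hle : T - m - d ≤ T := by omega
      rw [hset, Finset.Icc_eq_cons_Ioc hle, Finset.sum_cons, ← Finset.Icc_add_one_left_eq_Ioc]
      have hc1a := hc1 (T - m - (d + 1)) h (by omega)
      have hc1b := hc1 (T - m - d) hprev (by omega)
      have he1 : T - m - (T - m - (d + 1)) = d + 1 := by omega
      have he2 : T - m - (T - m - d) = d := by omega
      rw [he1] at hc1a
      rw [he2] at hc1b
      rw [hc1a]
      rw [hc1b] at IH ⊢
      have hS : α * ∑ i ∈ Finset.Icc (T - m - d + 1) T, c i
          = 1 - (T:ℝ) * (1 / T * (1 - α * m / T) * (1 - α / T) ^ d) := by linarith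
      rw [mul_add, hS, pow_succ]
      field_simp
      ring
  refine ⟨?_, ?_, ?_⟩
  · -- nonnegativity
    intro t ht1 htT
    by_cases hcase : t ≤ T - m
    · rw [hc1 t ht1 hcase]
      have h1 : (0:ℝ) ≤ 1 - α * m / T := by
        rw [sub_nonneg, div_le_one hT0]
        nlinarith
      have h2 : (0:ℝ) ≤ 1 - α / T := by
        rw [sub_nonneg, div_le_one hT0]
        have h1m : (1:ℝ) ≤ m := by exact_mod_cast hm
        linarith
      positivity
    · have ht1' : T - m + 1 ≤ t := by omega
      rw [hc2 t ht1' htT]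
      have htR : (t:ℝ) ≤ T := by exact_mod_cast htT
      have d1 : (0:ℝ) < 2 * (T:ℝ) - m + 1 - t := by linarith
      have d2 : (0:ℝ) < 2 * (T:ℝ) - m - t := by linarith
      exact div_nonneg hn.le (by positivity)
  · -- first family of equalities
    intro t ht1 ht2
    have hd : t = T - m - (T - m - t) := by omega
    have := main (T - m - t) (by omega)
    rwa [← hd] at this
  · -- second family of equalities
    intro t ht1 ht2
    have hk : T - (T - t) = t := by omega
    have hsum := tail (T - t) (by omega)
    have hset : T - (T - t) + 1 = t + 1 := by omega
    rw [hset] at hsum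
    rw [hsum, hc2 t ht1 ht2]
    have hcast : ((T - t : ℕ) : ℝ) = (T:ℝ) - t := by
      push_cast [ht2]; ring
    rw [hcast]
    have htR : (t:ℝ) ≤ T := by exact_mod_cast ht2
    have d1 : (0:ℝ) < 2 * (T:ℝ) - m + 1 - t := by linarith
    have d2 : (0:ℝ) < 2 * (T:ℝ) - m - t := by linarith
    have d3 : (0:ℝ) < (T:ℝ) - m + ((T:ℝ) - t) := by linarith
    field_simp
    ring
end

section
/- For α ∈ (0,1] and even n ≥ 2, the minimum over integers T with 1 ≤ T ≤ n of G̃(T,α,n) := G(T,α,max(0,2T−n)) is attained at T = n/2 and equals (1/α)(1 − (1 − α/(n/2))^{n/2}). -/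
/-- `G(T,α,m) = (1/α)(1 − (1 − αm/T)(1 − α/T)^{T−m})`. -/
noncomputable def G (T : ℕ) (α : ℝ) (m : ℕ) : ℝ :=
  (1 / α) * (1 - (1 - α * m / T) * (1 - α / T) ^ (T - m))

/-- `G̃(T,α,n) = G(T,α,max(0,2T−n))` (note `2*T - n` is truncated ℕ-subtraction,
which equals `max 0 (2T − n)`). -/
noncomputable def Gtilde (T : ℕ) (α : ℝ) (n : ℕ) : ℝ := G T α (2 * T - n)

lemma key_ineq (s : ℕ) (u : ℝ) (hu : -1 ≤ u) : (1 - s * u) * (1 + u) ^ s ≤ 1 := by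
  rcases le_or_gt u 1 with h | h
  · have hb : (1 : ℝ) - s * u ≤ (1 - u) ^ s := by
      have h2 := one_add_mul_le_pow (a := -u) (by linarith) s
      calc (1:ℝ) - s*u = 1 + s * (-u) := by ring
        _ ≤ (1 + -u)^s := h2
        _ = (1-u)^s := by ring_nf
    calc (1 - s*u) * (1+u)^s ≤ (1-u)^s * (1+u)^s :=
          mul_le_mul_of_nonneg_right hb (pow_nonneg (by linarith) s)
      _ = ((1-u)*(1+u))^s := (mul_pow _ _ _).symm
      _ ≤ 1 := pow_le_one₀ (by nlinarith [sq_nonneg u]) (by nlinarith [sq_nonneg u])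
  · rcases Nat.eq_zero_or_pos s with hs | hs
    · simp [hs]
    · have hs1 : (1:ℝ) ≤ s := by exact_mod_cast hs
      have hneg : (1:ℝ) - s*u ≤ 0 := by nlinarith
      exact le_trans (mul_nonpos_of_nonpos_of_nonneg hneg (pow_nonneg (by linarith) s))
        zero_le_one

lemma amgm_lemma (s : ℕ) (a b : ℝ) (ha : 0 ≤ a) (hb : 0 ≤ b) :
    a * b ^ s ≤ ((a + s * b) / (s + 1)) ^ (s + 1) := by
  set M : ℝ := (a + s*b)/(s+1) with hM
  clear_value M
  have hsb : 0 ≤ (s:ℝ) * b := by positivity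
  have hs1 : (0:ℝ) < (s:ℝ) + 1 := by positivity
  have hM0 : 0 ≤ M := by rw [hM]; positivity
  rcases eq_or_lt_of_le hM0 with h0 | hMpos
  · have hsum : a + (s:ℝ)*b = 0 := by
      have h0' : (a + (s:ℝ)*b)/((s:ℝ)+1) = 0 := by rw [← hM]; exact h0.symm
      rw [div_eq_zero_iff] at h0'
      rcases h0' with h | h
      · exact h
      · exact absurd h (by positivity)
    have ha0 : a = 0 := by linarith
    rw [ha0]
    simpa using pow_nonneg hM0 (s+1)
  · have hMne : M ≠ 0 := ne_of_gt hMpos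
    set u : ℝ := b / M - 1 with hu
    clear_value u
    have hu1 : -1 ≤ u := by
      have : 0 ≤ b / M := div_nonneg hb hM0
      simp only [hu]; linarith
    have hkey := key_ineq s u hu1
    have e1 : 1 + u = b / M := by rw [hu]; ring
    have e2 : 1 - s * u = a / M := by
      have haeq : a = ((s:ℝ)+1) * M - s * b := by
        rw [hM]; field_simp; ring
      rw [hu, haeq]; field_simp; ring
    rw [e1, e2] at hkey
    have key2 : a * b^s / M^(s+1) ≤ 1 := by
      calc a * b^s / M^(s+1) = a/M * (b/M)^s := by
            rw [div_pow, pow_succ]; ring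
        _ ≤ 1 := hkey
    exact (div_le_one (pow_pos hMpos (s+1))).mp key2

lemma step_lemma (α : ℝ) (hα1 : α ≤ 1) (T : ℕ) (hT : 1 ≤ T) :
    (1 - α / T) ^ T ≤ (1 - α / ((T:ℝ)+1)) ^ (T+1) := by
  have hT0 : (0:ℝ) < T := by exact_mod_cast hT
  have hb : 0 ≤ 1 - α / T := by
    have : α / T ≤ 1 := div_le_one_of_le₀ (le_trans hα1 (by exact_mod_cast hT)) (le_of_lt hT0)
    linarith
  have h := amgm_lemma T 1 (1 - α/T) zero_le_one hb
  have e : (1 + (T:ℝ) * (1 - α/T)) / ((T:ℝ)+1) = 1 - α/((T:ℝ)+1) := by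
    field_simp
    ring
  rw [e] at h
  simpa using h

lemma mono_lemma (α : ℝ) (hα1 : α ≤ 1) (S T : ℕ) (hS : 1 ≤ S) (hST : S ≤ T) :
    (1 - α / S) ^ S ≤ (1 - α / T) ^ T := by
  induction T with
  | zero => exact absurd hST (by omega)
  | succ T ih =>
    rcases Nat.lt_or_ge S (T+1) with h | h
    · have h1 : S ≤ T := by omega
      have h2 : 1 ≤ T := by omega
      push_cast
      exact le_trans (ih h1) (step_lemma α hα1 T h2)
    · have hST' : S = T+1 := by omega
      subst hST'
      exact le_refl _

theorem stmt_17 (α : ℝ) (hα : 0 < α) (hα1 : α ≤ 1) (n : ℕ) (hn : 2 ≤ n)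
    (heven : Even n) :
    (∀ T, 1 ≤ T → T ≤ n → Gtilde (n / 2) α n ≤ Gtilde T α n) ∧
      Gtilde (n / 2) α n = (1 / α) * (1 - (1 - α / (n / 2 : ℕ)) ^ (n / 2)) := by
  obtain ⟨k, hk⟩ := heven
  have hk1 : 1 ≤ k := by omega
  have hn2 : n / 2 = k := by omega
  have hk0 : (0:ℝ) < k := by exact_mod_cast hk1
  have hbk : 0 ≤ 1 - α / k := by
    have : α / k ≤ 1 := div_le_one_of_le₀ (le_trans hα1 (by exact_mod_cast hk1)) (le_of_lt hk0)
    linarith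
  have hval : Gtilde (n/2) α n = (1/α) * (1 - (1 - α/(k:ℝ))^k) := by
    rw [hn2]
    unfold Gtilde G
    have h0 : 2 * k - n = 0 := by omega
    rw [h0]
    simp
  constructor
  · intro T hT1 hTn
    rw [hval]
    unfold Gtilde G
    have hT0 : (0:ℝ) < T := by exact_mod_cast hT1
    have hbT : 0 ≤ 1 - α / T := by
      have : α / T ≤ 1 := div_le_one_of_le₀ (le_trans hα1 (by exact_mod_cast hT1)) (le_of_lt hT0)
      linarith
    have hinv : 0 ≤ 1/α := by positivity
    have main : (1 - α * ((2*T - n : ℕ):ℝ) / T) * (1 - α/T) ^ (T - (2*T - n)) ≤ (1 - α/(k:ℝ))^k := by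
      rcases Nat.lt_or_ge k T with hTk | hTk
      · -- T > k
        have hj1 : 1 ≤ T - k := by omega
        have hjk : T - k ≤ k := by omega
        set j : ℕ := T - k with hj
        have hm : 2*T - n = 2*j := by omega
        have hTm : T - (2*T - n) = k - j := by omega
        rw [hTm, hm]
        have hTkj : (T:ℝ) = (k:ℝ) + j := by
          have : T = k + j := by omega
          exact_mod_cast this
        rcases le_or_gt 0 (1 - α * ((2*j:ℕ):ℝ) / T) with hpos | hneg
        · have h1 := amgm_lemma (k-j) (1 - α * ((2*j:ℕ):ℝ)/T) (1 - α/T) hpos hbT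
          have hc : ((k-j:ℕ):ℝ) = (k:ℝ) - j := Nat.cast_sub hjk
          have e : (1 - α * ((2*j:ℕ):ℝ)/T + ((k-j:ℕ):ℝ) * (1 - α/T)) / (((k-j:ℕ):ℝ) + 1)
              = 1 - α / (((k-j+1:ℕ)):ℝ) := by
            rw [hc]
            push_cast [Nat.cast_sub hjk]
            rw [hTkj]
            have hkj0 : (0:ℝ) < (k:ℝ) - j + 1 := by
              have : (j:ℝ) ≤ k := by exact_mod_cast hjk
              linarith
            have hT0' : (0:ℝ) < (k:ℝ) + j := by rw [← hTkj]; exact hT0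
            field_simp
            ring
          rw [e] at h1
          have h2 : (1 - α / (((k-j+1:ℕ)):ℝ))^((k-j)+1) ≤ (1 - α/(k:ℝ))^k :=
            mono_lemma α hα1 (k-j+1) k (by omega) (by omega)
          calc (1 - α * ((2*j:ℕ):ℝ)/T) * (1 - α/T)^(k-j)
              ≤ (1 - α / (((k-j+1:ℕ)):ℝ))^((k-j)+1) := h1
            _ ≤ (1 - α/(k:ℝ))^k := h2
        · have : (1 - α * ((2*j:ℕ):ℝ) / T) * (1 - α/T)^(k-j) ≤ 0 :=
            mul_nonpos_of_nonpos_of_nonneg (le_of_lt hneg) (pow_nonneg hbT _)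
          exact le_trans this (pow_nonneg hbk k)
      · -- T ≤ k
        have hm : 2*T - n = 0 := by omega
        rw [hm]
        simp only [Nat.cast_zero, mul_zero, zero_div, sub_zero, Nat.sub_zero, one_mul]
        exact mono_lemma α hα1 T k hT1 hTk
    have h1k : 1 - (1 - α/(k:ℝ))^k ≤ 1 - (1 - α * ((2*T - n : ℕ):ℝ) / T) * (1 - α/T) ^ (T - (2*T - n)) := by
      linarith
    exact mul_le_mul_of_nonneg_left h1k hinv
  · rw [hval, hn2]
end
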